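/- For every n ≥ 2 such that n is not a power of 2, the order superpower graph S(Q_{4n}) of the generalized quaternion group Q_{4n} of order 4n is not minimally edge connected. -/

import Mathlib

/-- The degree of a vertex: the number of its neighbours. -/
noncomputable def gDeg {V : Type*} (G : SimpleGraph V) (v : V) : ℕ :=
  (G.neighborSet v).ncard

/-- The minimum degree of a graph. -/
noncomputable def minDeg {V : Type*} (G : SimpleGraph V) : ℕ :=
  sInf (Set.range (gDeg G))

/-- The edge connectivity: the minimum size of a set of edges whose removal
disconnects the graph. -/
noncomputable def edgeConn {V : Type*} (G : SimpleGraph V) : ℕ :=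
  sInf {n : ℕ | ∃ S : Set (Sym2 V), S ⊆ G.edgeSet ∧ S.ncard = n ∧
    ¬ (G.deleteEdges S).Connected}

/-- The vertex connectivity: the minimum size of a set of vertices whose removal
disconnects the graph or leaves a single vertex. -/
noncomputable def vertexConn {V : Type*} (G : SimpleGraph V) : ℕ :=
  sInf {n : ℕ | ∃ S : Set V, S.ncard = n ∧ Sᶜ.Nonempty ∧
    (¬ (G.induce Sᶜ).Preconnected ∨ Sᶜ.ncard = 1)}

/-- A graph is minimally edge connected if deleting any edge decreases the
edge connectivity by one. -/
def MinEdgeConnected {V : Type*} (G : SimpleGraph V) : Prop :=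
  ∀ e ∈ G.edgeSet, edgeConn (G.deleteEdges {e}) = edgeConn G - 1

/-- A graph is minimally connected if deleting any edge decreases the
vertex connectivity by one. -/
def MinConnected {V : Type*} (G : SimpleGraph V) : Prop :=
  ∀ e ∈ G.edgeSet, vertexConn (G.deleteEdges {e}) = vertexConn G - 1

/-- The power graph of a group: distinct `x, y` are adjacent iff one is a
natural power of the other. -/
def powerGraph (G : Type*) [Group G] : SimpleGraph G :=
  SimpleGraph.fromRel (fun x y => ∃ m : ℕ, y = x ^ m)

/-- The enhanced power graph of a group: distinct `x, y` are adjacent iff they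
lie in a common cyclic subgroup. -/
def enhancedPowerGraph (G : Type*) [Group G] : SimpleGraph G :=
  SimpleGraph.fromRel
    (fun x y => ∃ z : G, x ∈ Subgroup.zpowers z ∧ y ∈ Subgroup.zpowers z)

/-- The order superpower graph of a group: distinct `x, y` are adjacent iff the
order of one divides the order of the other. -/
def superpowerGraph (G : Type*) [Group G] : SimpleGraph G :=
  SimpleGraph.fromRel (fun x y => orderOf x ∣ orderOf y)


section AuxGraph

open SimpleGraph Finset

private lemma reach_eq' {V : Type*} {G : SimpleGraph V} {w v : V}
    (h : ∀ x, ¬ G.Adj w x) (hr : G.Reachable w v) : w = v := by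
  obtain ⟨p⟩ := hr
  cases p with
  | nil => rfl
  | cons h' _ => exact absurd h' (h _)

private lemma conn_of_univ {V : Type*} (G : SimpleGraph V) (u : V)
    (hu : ∀ v, v ≠ u → G.Adj u v) : G.Connected := by
  haveI : Nonempty V := ⟨u⟩
  have h : ∀ v, G.Reachable u v := by
    intro v
    by_cases hv : v = u
    · subst hv; exact SimpleGraph.Reachable.refl v
    · exact (hu v hv).reachable
  exact ⟨fun v w => (h v).symm.trans (h w)⟩

private lemma edgeConn_set_nonempty {V : Type*} (G : SimpleGraph V) (v0 v1 : V)
    (hne : v0 ≠ v1) :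
    {m : ℕ | ∃ S : Set (Sym2 V), S ⊆ G.edgeSet ∧ S.ncard = m ∧
      ¬ (G.deleteEdges S).Connected}.Nonempty := by
  refine ⟨G.edgeSet.ncard, G.edgeSet, subset_rfl, rfl, fun hc => ?_⟩
  have h1 : ∀ x, ¬ (G.deleteEdges G.edgeSet).Adj v0 x := by
    intro x hx
    rw [deleteEdges_adj] at hx
    exact hx.2 hx.1
  exact hne (reach_eq' h1 (hc.preconnected v0 v1))

private lemma edgeConn_le_deg' {V : Type*} (G : SimpleGraph V) (w v0 : V)
    (hv0 : v0 ≠ w) : edgeConn G ≤ gDeg G w := by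
  apply Nat.sInf_le
  refine ⟨{e ∈ G.edgeSet | w ∈ e}, fun e he => he.1, ?_, ?_⟩
  · have himg : {e ∈ G.edgeSet | w ∈ e} = (fun v => s(w, v)) '' G.neighborSet w := by
      ext e
      constructor
      · rintro ⟨he, hw⟩
        induction e with
        | h x y =>
          rw [Sym2.mem_iff] at hw
          rcases hw with rfl | rfl
          · exact ⟨y, he, rfl⟩
          · exact ⟨x, G.adj_symm he, Sym2.eq_swap⟩
      · rintro ⟨v, hv, rfl⟩
        exact ⟨hv, Sym2.mem_mk_left _ _⟩
    rw [himg, Set.ncard_image_of_injOn, gDeg]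
    intro x _ y _ hxy
    simpa using Sym2.congr_right.mp hxy
  · intro hc
    have h1 : ∀ x, ¬ (G.deleteEdges {e ∈ G.edgeSet | w ∈ e}).Adj w x := by
      intro x hx
      rw [deleteEdges_adj] at hx
      exact hx.2 ⟨hx.1, Sym2.mem_mk_left _ _⟩
    exact hv0 (reach_eq' h1 (hc.preconnected w v0)).symm

private lemma connected_of_small_cut {V : Type*} [Fintype V] (H : SimpleGraph V) (u : V)
    (hu : ∀ v, v ≠ u → H.Adj u v) (δ : ℕ) (hδ : ∀ v, δ ≤ gDeg H v)
    (S : Set (Sym2 V)) (hcard : S.ncard < δ) :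
    (H.deleteEdges S).Connected := by
  classical
  set H' := H.deleteEdges S with hH'
  have hreach : ∀ v, H'.Reachable u v := by
    by_contra hno
    push_neg at hno
    set C : Finset V := Finset.univ.filter (fun v => ¬ H'.Reachable u v) with hCdef
    have hne : C.Nonempty := by
      obtain ⟨v, hv⟩ := hno
      exact ⟨v, by simp [hCdef, hv]⟩
    have huC : u ∉ C := by
      simp only [hCdef, Finset.mem_filter]
      exact fun h => h.2 (SimpleGraph.Reachable.refl u)
    have hmemC : ∀ v, v ∈ C ↔ ¬ H'.Reachable u v := by
      intro v; simp [hCdef]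
    have key : ∀ x ∈ C, ∀ y, y ∉ C → H.Adj x y → s(x, y) ∈ S := by
      intro x hx y hy hadj
      by_contra hs
      have hadj' : H'.Adj y x := by
        rw [hH', deleteEdges_adj]
        exact ⟨hadj.symm, by rwa [Sym2.eq_swap]⟩
      rw [hmemC] at hx hy
      push_neg at hy
      exact hx (hy.trans hadj'.reachable)
    have hSfin : S.Finite := Set.toFinite S
    have hSn : S.ncard = hSfin.toFinset.card := Set.ncard_eq_toFinset_card S hSfin
    have h1 : C.card ≤ S.ncard := by
      rw [hSn]
      apply Finset.card_le_card_of_injOn (fun x => s(u, x))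
      · intro x hx
        have hxu : x ≠ u := fun h => huC (h ▸ hx)
        have := key x hx u huC (hu x hxu).symm
        rw [Finset.mem_coe, Set.Finite.mem_toFinset]
        rwa [Sym2.eq_swap] at this
      · intro x _ y _ hxy
        simpa using Sym2.congr_right.mp hxy
    have hclt : C.card < δ := lt_of_le_of_lt h1 hcard
    set T : Finset (V × V) :=
      Finset.univ.filter (fun p => p.1 ∈ C ∧ p.2 ∉ C ∧ H.Adj p.1 p.2) with hTdef
    have hT_le : T.card ≤ S.ncard := by
      rw [hSn]
      apply Finset.card_le_card_of_injOn (fun p => s(p.1, p.2))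
      · intro p hp
        rw [hTdef, Finset.mem_coe, Finset.mem_filter] at hp
        rw [Finset.mem_coe, Set.Finite.mem_toFinset]
        exact key p.1 hp.2.1 p.2 hp.2.2.1 hp.2.2.2
      · intro p hp q hq hpq
        rw [Finset.mem_coe, Finset.mem_filter] at hp hq
        rcases Sym2.eq_iff.mp hpq with ⟨h1', h2'⟩ | ⟨h1', h2'⟩
        · exact Prod.ext h1' h2'
        · exact absurd (h1' ▸ hp.2.1) hq.2.2.1
    have hfiber : ∀ x ∈ C, δ + 1 ≤ (T.filter (fun p => p.1 = x)).card + C.card := by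
      intro x hx
      set Nx : Finset V := (H.neighborSet x).toFinset with hNx
      have hdeg : δ ≤ Nx.card := by
        have := hδ x
        rwa [gDeg, Set.ncard_eq_toFinset_card'] at this
      have hsub : Nx ⊆ ((T.filter (fun p => p.1 = x)).image Prod.snd) ∪ (C.erase x) := by
        intro y hy
        rw [hNx, Set.mem_toFinset, SimpleGraph.mem_neighborSet] at hy
        by_cases hyC : y ∈ C
        · exact Finset.mem_union_right _
            (Finset.mem_erase.mpr ⟨fun h => H.irrefl (h ▸ hy), hyC⟩)
        · apply Finset.mem_union_left
          apply Finset.mem_image.mpr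
          exact ⟨(x, y), by simp [hTdef, hx, hyC, hy], rfl⟩
      have h2 := Finset.card_le_card hsub
      have h3 := Finset.card_union_le
        ((T.filter (fun p => p.1 = x)).image Prod.snd) (C.erase x)
      have h4 := Finset.card_image_le (s := T.filter (fun p => p.1 = x)) (f := Prod.snd)
      have h5 : (C.erase x).card = C.card - 1 := Finset.card_erase_of_mem hx
      have hc1 : 1 ≤ C.card := Finset.card_pos.mpr ⟨x, hx⟩
      omega
    have hsum : T.card = ∑ x ∈ C, (T.filter (fun p => p.1 = x)).card := by
      apply Finset.card_eq_sum_card_fiberwise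
      intro p hp
      rw [hTdef, Finset.mem_coe, Finset.mem_filter] at hp
      exact hp.2.1
    have hTbig : C.card * (δ + 1 - C.card) ≤ T.card := by
      rw [hsum]
      calc C.card * (δ + 1 - C.card) = ∑ _x ∈ C, (δ + 1 - C.card) := by
            rw [Finset.sum_const, smul_eq_mul]
        _ ≤ ∑ x ∈ C, (T.filter (fun p => p.1 = x)).card := by
            apply Finset.sum_le_sum
            intro x hx
            have := hfiber x hx
            omega
    obtain ⟨x0, hx0⟩ := hne
    have hc1 : 1 ≤ C.card := Finset.card_pos.mpr ⟨x0, hx0⟩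
    have hd : δ + 1 - C.card = (δ - C.card) + 1 := by omega
    have hfin : δ ≤ C.card * (δ + 1 - C.card) := by
      rw [hd, Nat.mul_add, Nat.mul_one]
      have := Nat.le_mul_of_pos_left (δ - C.card) hc1
      omega
    omega
  haveI : Nonempty V := ⟨u⟩
  exact ⟨fun v w => (hreach v).symm.trans (hreach w)⟩

end AuxGraph

section AuxQuat

open QuaternionGroup

private lemma odd_prime_exists' {n : ℕ} (hn : 2 ≤ n) (hpow : ¬ ∃ k : ℕ, n = 2 ^ k) :
    ∃ p : ℕ, p.Prime ∧ p ∣ n ∧ p ≠ 2 := by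
  by_contra h
  push_neg at h
  exact hpow ⟨n.primeFactorsList.length,
    Nat.eq_prime_pow_of_unique_prime_dvd (by omega) (fun {d} hd hdvd => h d hd hdvd)⟩

variable {n : ℕ} [NeZero n]

private lemma spg_adj' (x y : QuaternionGroup n) :
    (superpowerGraph (QuaternionGroup n)).Adj x y ↔
      x ≠ y ∧ (orderOf x ∣ orderOf y ∨ orderOf y ∣ orderOf x) := by
  simp [superpowerGraph, SimpleGraph.fromRel_adj]

private lemma orderOf_z' {p : ℕ} (hp : p.Prime) (hdvd : p ∣ n) :
    orderOf ((a 1 : QuaternionGroup n) ^ (2 * n / p)) = p := by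
  have hn0 : (2 * n : ℕ) ≠ 0 := by
    have := NeZero.pos n; omega
  have hd2n : p ∣ 2 * n := hdvd.mul_left 2
  rw [orderOf_pow, orderOf_a_one, Nat.gcd_eq_right (Nat.div_dvd_of_dvd hd2n),
    Nat.div_div_self hd2n hn0]

private lemma xa_inj' : Function.Injective (xa : ZMod (2*n) → QuaternionGroup n) := by
  intro i j h; injection h

private lemma a_inj' : Function.Injective (a : ZMod (2*n) → QuaternionGroup n) := by
  intro i j h; injection h

private lemma ncard_range_xa' :
    (Set.range (xa : ZMod (2*n) → QuaternionGroup n)).ncard = 2 * n := by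
  rw [← Set.image_univ, Set.ncard_image_of_injective _ xa_inj', Set.ncard_univ,
    Nat.card_eq_fintype_card, ZMod.card]

private lemma ncard_range_a' :
    (Set.range (a : ZMod (2*n) → QuaternionGroup n)).ncard = 2 * n := by
  rw [← Set.image_univ, Set.ncard_image_of_injective _ a_inj', Set.ncard_univ,
    Nat.card_eq_fintype_card, ZMod.card]

private lemma deg_xa' (i : ZMod (2*n)) :
    2 * n ≤ gDeg (superpowerGraph (QuaternionGroup n)) (xa i) := by
  have hsub : insert ((1 : QuaternionGroup n))
      (Set.range (xa : ZMod (2*n) → _) \ {xa i}) ⊆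
      (superpowerGraph (QuaternionGroup n)).neighborSet (xa i) := by
    intro w hw
    rcases hw with rfl | ⟨⟨j, rfl⟩, hne⟩
    · rw [SimpleGraph.mem_neighborSet, spg_adj']
      refine ⟨?_, Or.inr ?_⟩
      · rw [one_def]; intro h; exact absurd h (fun h' => by cases h')
      · simp [orderOf_one]
    · rw [SimpleGraph.mem_neighborSet, spg_adj']
      refine ⟨fun h => hne (h ▸ rfl), Or.inl (by rw [orderOf_xa, orderOf_xa])⟩
  have hcard : (insert ((1 : QuaternionGroup n))
      (Set.range (xa : ZMod (2*n) → _) \ {xa i})).ncard = 2 * n := by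
    rw [Set.ncard_insert_of_notMem (by rw [one_def]; rintro ⟨⟨j, hj⟩, _⟩; cases hj), Set.ncard_diff_singleton_of_mem
      (Set.mem_range_self i), ncard_range_xa']
    have := NeZero.pos n
    omega
  calc 2 * n = _ := hcard.symm
    _ ≤ _ := Set.ncard_le_ncard hsub (Set.toFinite _)

private lemma deg_z' {p : ℕ} (hp : p.Prime) (hp2 : p ≠ 2) (hdvd : p ∣ n) :
    gDeg (superpowerGraph (QuaternionGroup n)) ((a 1 : QuaternionGroup n) ^ (2 * n / p))
      ≤ 2 * n - 1 := by
  set z := (a 1 : QuaternionGroup n) ^ (2 * n / p) with hz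
  have hoz : orderOf z = p := orderOf_z' hp hdvd
  have hzr : z ∈ Set.range (a : ZMod (2*n) → QuaternionGroup n) := by
    rw [hz, a_one_pow]; exact Set.mem_range_self _
  have hsub : (superpowerGraph (QuaternionGroup n)).neighborSet z ⊆
      Set.range (a : ZMod (2*n) → QuaternionGroup n) \ {z} := by
    intro w hw
    rw [SimpleGraph.mem_neighborSet, spg_adj'] at hw
    obtain ⟨hne, hdv⟩ := hw
    refine ⟨?_, fun h => hne (by rw [Set.mem_singleton_iff] at h; exact h.symm)⟩
    cases w with
    | a j => exact Set.mem_range_self _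
    | xa j =>
      exfalso
      rw [orderOf_xa, hoz] at hdv
      rcases hdv with hpd4 | h4dp
      · have h2 : p ∣ 2 := hp.dvd_of_dvd_pow (show p ∣ 2 ^ 2 by norm_num; exact hpd4)
        exact hp2 ((Nat.prime_dvd_prime_iff_eq hp Nat.prime_two).mp h2)
      · have h2 : 2 ∣ p := dvd_trans (by norm_num) h4dp
        exact hp2 ((Nat.prime_dvd_prime_iff_eq Nat.prime_two hp).mp h2).symm
  calc gDeg _ z ≤ (Set.range (a : ZMod (2*n) → QuaternionGroup n) \ {z}).ncard :=
        Set.ncard_le_ncard hsub (Set.toFinite _)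
    _ = 2 * n - 1 := by rw [Set.ncard_diff_singleton_of_mem hzr, ncard_range_a']

end AuxQuat

/-- For `n ≥ 2` not a power of `2`, the order superpower graph of
the generalized quaternion group of order `4n` is not minimally edge connected. -/
theorem stmt_13 (n : ℕ) (hn : 2 ≤ n) (hpow : ¬ ∃ k : ℕ, n = 2 ^ k) :
    ¬ MinEdgeConnected (superpowerGraph (QuaternionGroup n)) := by
  intro hmin
  haveI : NeZero n := ⟨by omega⟩
  haveI : Fact (1 < 2 * n) := ⟨by omega⟩
  obtain ⟨p, hp, hdvd, hp2⟩ := odd_prime_exists' hn hpow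
  set G := superpowerGraph (QuaternionGroup n) with hG
  set z : QuaternionGroup n := QuaternionGroup.a 1 ^ (2 * n / p) with hzdef
  set x : QuaternionGroup n := QuaternionGroup.xa 0 with hxdef
  set y : QuaternionGroup n := QuaternionGroup.xa 1 with hydef
  have hxy : G.Adj x y := by
    rw [hG, spg_adj']
    refine ⟨?_, Or.inl ?_⟩
    · rw [hxdef, hydef]
      intro h
      exact zero_ne_one (xa_inj' h)
    · rw [hxdef, hydef, QuaternionGroup.orderOf_xa, QuaternionGroup.orderOf_xa]
  have hx1 : x ≠ (1 : QuaternionGroup n) := by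
    rw [hxdef, QuaternionGroup.one_def]; intro h; cases h
  have hy1 : y ≠ (1 : QuaternionGroup n) := by
    rw [hydef, QuaternionGroup.one_def]; intro h; cases h
  have he : s(x, y) ∈ G.edgeSet := hxy
  have hspec := hmin s(x, y) he
  set δ := minDeg G with hδdef
  have hδz : δ ≤ gDeg G z := Nat.sInf_le ⟨z, rfl⟩
  have hz2n : gDeg G z ≤ 2 * n - 1 := deg_z' hp hp2 hdvd
  set H := G.deleteEdges {s(x, y)} with hH
  -- universal vertex 1 in G and in H
  have hunivG : ∀ v : QuaternionGroup n, v ≠ 1 → G.Adj 1 v := by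
    intro v hv
    rw [hG, spg_adj']
    exact ⟨fun h => hv h.symm, Or.inl (by simp [orderOf_one])⟩
  have hunivH : ∀ v : QuaternionGroup n, v ≠ 1 → H.Adj 1 v := by
    intro v hv
    rw [hH, SimpleGraph.deleteEdges_adj]
    refine ⟨hunivG v hv, ?_⟩
    intro hmem
    rw [Set.mem_singleton_iff] at hmem
    rcases Sym2.eq_iff.mp hmem with ⟨h1, _⟩ | ⟨h1, _⟩
    · exact hx1 h1.symm
    · exact hy1 h1.symm
  -- degree bound in H
  have hδ2n : δ ≤ 2 * n - 1 := le_trans hδz hz2n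
  have hnpos : 0 < n := NeZero.pos n
  have hcase : ∀ v w' : QuaternionGroup n,
      G.neighborSet v ⊆ insert w' (H.neighborSet v) → 2 * n ≤ gDeg G v →
      δ ≤ gDeg H v := by
    intro v w' hsub hdeg
    have h1 : gDeg G v ≤ gDeg H v + 1 :=
      le_trans (Set.ncard_le_ncard hsub (Set.toFinite _)) (Set.ncard_insert_le _ _)
    omega
  have hHdeg : ∀ v, δ ≤ gDeg H v := by
    intro v
    by_cases hvx : v = x
    · refine hcase v y ?_ (hvx ▸ deg_xa' 0)
      intro u hu
      by_cases huy : u = y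
      · exact huy ▸ Set.mem_insert _ _
      · refine Set.mem_insert_of_mem _ ?_
        rw [SimpleGraph.mem_neighborSet, hH, SimpleGraph.deleteEdges_adj]
        refine ⟨hu, fun hmem => ?_⟩
        rw [Set.mem_singleton_iff] at hmem
        rcases Sym2.eq_iff.mp hmem with ⟨_, h2⟩ | ⟨h1, h2⟩
        · exact huy h2
        · exact hxy.ne (hvx.symm.trans h1)
    · by_cases hvy : v = y
      · refine hcase v x ?_ (hvy ▸ deg_xa' 1)
        intro u hu
        by_cases hux : u = x
        · exact hux ▸ Set.mem_insert _ _
        · refine Set.mem_insert_of_mem _ ?_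
          rw [SimpleGraph.mem_neighborSet, hH, SimpleGraph.deleteEdges_adj]
          refine ⟨hu, fun hmem => ?_⟩
          rw [Set.mem_singleton_iff] at hmem
          rcases Sym2.eq_iff.mp hmem with ⟨h1, h2⟩ | ⟨h1, h2⟩
          · exact hxy.ne (hvy.symm.trans h1).symm
          · exact hux h2
      · have hEq : H.neighborSet v = G.neighborSet v := by
          ext w'
          rw [SimpleGraph.mem_neighborSet, SimpleGraph.mem_neighborSet, hH,
            SimpleGraph.deleteEdges_adj]
          constructor
          · exact fun h => h.1
          · intro h
            refine ⟨h, fun hmem => ?_⟩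
            rw [Set.mem_singleton_iff] at hmem
            rcases Sym2.eq_iff.mp hmem with ⟨h1, _⟩ | ⟨h1, _⟩
            · exact hvx h1
            · exact hvy h1
        calc δ ≤ gDeg G v := Nat.sInf_le ⟨v, rfl⟩
          _ = gDeg H v := by rw [gDeg, gDeg, hEq]
  -- lower bound: δ ≤ edgeConn H
  have hlow : δ ≤ edgeConn H := by
    have hne := edgeConn_set_nonempty H x (1 : QuaternionGroup n) hx1
    obtain ⟨S, hS1, hS2, hS3⟩ := Nat.sInf_mem hne
    by_contra hlt
    push_neg at hlt
    have hEC : edgeConn H = S.ncard := (hS2 : S.ncard = _).symm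
    rw [hEC] at hlt
    exact hS3 (connected_of_small_cut H 1 hunivH δ hHdeg S hlt)
  -- upper bound: edgeConn G ≤ δ
  obtain ⟨w, hw⟩ := Nat.sInf_mem (Set.range_nonempty (gDeg G))
  have hup : edgeConn G ≤ δ := by
    obtain ⟨v0, hv0⟩ := exists_ne w
    calc edgeConn G ≤ gDeg G w := edgeConn_le_deg' G w v0 hv0
      _ = δ := hw
  -- edgeConn G ≥ 1
  have hpos : 1 ≤ edgeConn G := by
    by_contra h0
    push_neg at h0
    have h : edgeConn G = 0 := by omega
    obtain ⟨S, hS1, hS2, hS3⟩ :=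
      Nat.sInf_mem (edgeConn_set_nonempty G x (1 : QuaternionGroup n) hx1)
    have hS2' : S.ncard = edgeConn G := hS2
    rw [h] at hS2'
    rw [(Set.ncard_eq_zero (Set.toFinite S)).mp hS2', SimpleGraph.deleteEdges_empty] at hS3
    exact hS3 (conn_of_univ G 1 hunivG)
  omega
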